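/- arXiv:2409.02023 — 4 statements merged into one kernel-verified Lean document; each statement's English description precedes it below -/
import Mathlib

section
/- For any positive integer n, ∑_{d | n, d odd} 2·(-1)^n / d = ∑_{d | n, n/d odd} 2·(-1)^d / d + ∑_{d | n, n/d even} 1/d, where all sums are over positive divisors d of n satisfying the stated parity conditions. -/
open Finset

private lemma qaux : ∀ k : ℕ, 0 < k →
    ∑ d ∈ k.divisors.filter (fun d => Odd d), 2 / (d : ℚ) =
      ∑ d ∈ k.divisors.filter (fun d => Odd (k / d)), 2 / (d : ℚ) +
        ∑ d ∈ k.divisors.filter (fun d => Even (k / d)), 1 / (d : ℚ) := by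
  intro k
  induction k using Nat.strong_induction_on with
  | _ k ih =>
    intro hk
    rcases Nat.even_or_odd k with hke | hko
    · -- k even
      obtain ⟨m, rfl⟩ := hke
      simp only [← two_mul] at *
      have hm : 0 < m := by omega
      have h1 : (2*m).divisors.filter (fun d => Odd d) =
          m.divisors.filter (fun d => Odd d) := by
        ext d
        simp only [mem_filter, Nat.mem_divisors]
        constructor
        · rintro ⟨⟨hd, _⟩, hodd⟩
          exact ⟨⟨(Nat.coprime_two_right.mpr hodd).dvd_of_dvd_mul_left hd, by omega⟩, hodd⟩
        · rintro ⟨⟨hd, _⟩, hodd⟩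
          exact ⟨⟨hd.mul_left 2, by omega⟩, hodd⟩
      have h2 : (2*m).divisors.filter (fun d => Even (2*m/d)) = m.divisors := by
        ext d
        simp only [mem_filter, Nat.mem_divisors]
        constructor
        · rintro ⟨⟨hd, _⟩, t, ht⟩
          have hmul : 2*m/d * d = 2*m := Nat.div_mul_cancel hd
          rw [ht] at hmul
          have h' : 2*(t*d) = 2*m := by linarith
          have htd : t*d = m := Nat.eq_of_mul_eq_mul_left (by norm_num) h'
          exact ⟨⟨t, by rw [← htd]; ring⟩, by omega⟩
        · rintro ⟨hd, _⟩
          refine ⟨⟨hd.mul_left 2, by omega⟩, ?_⟩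
          rw [Nat.mul_div_assoc 2 hd]
          exact even_two_mul _
      have h3 : ∑ d ∈ (2*m).divisors.filter (fun d => Odd (2*m/d)), 2 / (d : ℚ) =
          ∑ e ∈ m.divisors.filter (fun e => Odd (m/e)), 1 / (e : ℚ) := by
        have himg : (2*m).divisors.filter (fun d => Odd (2*m/d)) =
            (m.divisors.filter (fun e => Odd (m/e))).image (fun e => 2*e) := by
          ext d
          simp only [mem_filter, Nat.mem_divisors, mem_image]
          constructor
          · rintro ⟨⟨hd, _⟩, hodd⟩
            have hd0 : 0 < d := Nat.pos_of_dvd_of_pos hd (by omega)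
            have hde : Even d := by
              by_contra hde
              rw [Nat.not_even_iff_odd] at hde
              have hmul : 2*m/d * d = 2*m := Nat.div_mul_cancel hd
              have : Odd (2*m/d * d) := hodd.mul hde
              rw [hmul] at this
              exact (Nat.not_odd_iff_even.mpr (even_two_mul m)) this
            obtain ⟨e, rfl⟩ := hde
            rw [← two_mul] at *
            have he : e ∣ m := (mul_dvd_mul_iff_left (two_ne_zero)).mp hd
            refine ⟨e, ⟨⟨he, by omega⟩, ?_⟩, rfl⟩
            rwa [Nat.mul_div_mul_left _ _ (by norm_num : 0 < 2)] at hodd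
          · rintro ⟨e, ⟨⟨he, _⟩, hodd⟩, rfl⟩
            refine ⟨⟨mul_dvd_mul_left 2 he, by omega⟩, ?_⟩
            rwa [Nat.mul_div_mul_left _ _ (by norm_num : 0 < 2)]
        rw [himg, sum_image (by intro a _ b _ h; simp only at h; omega)]
        apply sum_congr rfl
        intro e he
        rw [mem_filter, Nat.mem_divisors] at he
        have : (e : ℚ) ≠ 0 := by
          have := Nat.pos_of_dvd_of_pos he.1.1 hm
          positivity
        push_cast
        field_simp
      rw [h1, h2, h3]
      have hpart : ∑ d ∈ m.divisors, (1 : ℚ) / d =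
          ∑ d ∈ m.divisors.filter (fun d => Odd (m/d)), 1 / (d : ℚ) +
            ∑ d ∈ m.divisors.filter (fun d => Even (m/d)), 1 / (d : ℚ) := by
        rw [← sum_filter_add_sum_filter_not m.divisors (fun d => Odd (m/d))]
        congr 1
        apply sum_congr _ (fun _ _ => rfl)
        apply filter_congr
        intro d _
        simp [Nat.not_odd_iff_even]
      have ihm := ih m (by omega) hm
      have hdouble : ∑ d ∈ m.divisors.filter (fun d => Odd d), 2 / (d : ℚ) =
          ∑ d ∈ m.divisors.filter (fun d => Odd d), (1 / (d : ℚ) + 1 / (d : ℚ)) := by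
        apply sum_congr rfl; intro d _; ring
      have hdouble2 : ∑ d ∈ m.divisors.filter (fun d => Odd (m/d)), 2 / (d : ℚ) =
          ∑ d ∈ m.divisors.filter (fun d => Odd (m/d)), (1 / (d : ℚ) + 1 / (d : ℚ)) := by
        apply sum_congr rfl; intro d _; ring
      rw [hpart, ihm, hdouble2]
      rw [sum_add_distrib]
      ring
    · -- k odd
      have hall : ∀ d ∈ k.divisors, Odd d ∧ Odd (k / d) := by
        intro d hd
        rw [Nat.mem_divisors] at hd
        obtain ⟨c, rfl⟩ := hd.1
        have hd0 : 0 < d := by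
          rcases Nat.eq_zero_or_pos d with h | h
          · subst h; simp at hk
          · exact h
        rw [Nat.mul_div_cancel_left c hd0]
        exact ⟨(Nat.odd_mul.mp hko).1, (Nat.odd_mul.mp hko).2⟩
      have h1 : k.divisors.filter (fun d => Odd d) = k.divisors :=
        filter_true_of_mem fun d hd => (hall d hd).1
      have h2 : k.divisors.filter (fun d => Odd (k / d)) = k.divisors :=
        filter_true_of_mem fun d hd => (hall d hd).2
      have h3 : k.divisors.filter (fun d => Even (k / d)) = ∅ :=
        filter_false_of_mem fun d hd => by
          simpa [Nat.not_even_iff_odd] using (hall d hd).2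
      rw [h1, h2, h3, sum_empty, add_zero]

theorem stmt6 (n : ℕ) (hn : 0 < n) :
    ∑ d ∈ n.divisors.filter (fun d => Odd d), 2 * (-1 : ℚ) ^ n / (d : ℚ) =
      ∑ d ∈ n.divisors.filter (fun d => Odd (n / d)), 2 * (-1 : ℚ) ^ d / (d : ℚ) +
        ∑ d ∈ n.divisors.filter (fun d => Even (n / d)), 1 / (d : ℚ) := by
  rcases Nat.even_or_odd n with hne | hno
  · -- n even
    have hL : ∑ d ∈ n.divisors.filter (fun d => Odd d), 2 * (-1 : ℚ) ^ n / (d : ℚ) =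
        ∑ d ∈ n.divisors.filter (fun d => Odd d), 2 / (d : ℚ) := by
      apply Finset.sum_congr rfl
      intro d _
      rw [hne.neg_one_pow, mul_one]
    have hR : ∑ d ∈ n.divisors.filter (fun d => Odd (n / d)), 2 * (-1 : ℚ) ^ d / (d : ℚ) =
        ∑ d ∈ n.divisors.filter (fun d => Odd (n / d)), 2 / (d : ℚ) := by
      apply Finset.sum_congr rfl
      intro d hd
      rw [Finset.mem_filter, Nat.mem_divisors] at hd
      have hde : Even d := by
        by_contra hde
        rw [Nat.not_even_iff_odd] at hde
        have hmul : n / d * d = n := Nat.div_mul_cancel hd.1.1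
        have : Odd n := by rw [← hmul]; exact hd.2.mul hde
        exact (Nat.not_odd_iff_even.mpr hne) this
      rw [hde.neg_one_pow, mul_one]
    rw [hL, hR]
    exact qaux n hn
  · -- n odd
    have hall : ∀ d ∈ n.divisors, Odd d ∧ Odd (n / d) := by
      intro d hd
      rw [Nat.mem_divisors] at hd
      obtain ⟨c, rfl⟩ := hd.1
      have hd0 : 0 < d := by
        rcases Nat.eq_zero_or_pos d with h | h
        · subst h; simp at hn
        · exact h
      rw [Nat.mul_div_cancel_left c hd0]
      exact ⟨(Nat.odd_mul.mp hno).1, (Nat.odd_mul.mp hno).2⟩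
    have h1 : n.divisors.filter (fun d => Odd d) = n.divisors :=
      Finset.filter_true_of_mem fun d hd => (hall d hd).1
    have h2 : n.divisors.filter (fun d => Odd (n / d)) = n.divisors :=
      Finset.filter_true_of_mem fun d hd => (hall d hd).2
    have h3 : n.divisors.filter (fun d => Even (n / d)) = ∅ :=
      Finset.filter_false_of_mem fun d hd => by
        simpa [Nat.not_even_iff_odd] using (hall d hd).2
    rw [h1, h2, h3, Finset.sum_empty, add_zero]
    apply Finset.sum_congr rfl
    intro d hd
    rw [hno.neg_one_pow, ((hall d hd).1).neg_one_pow]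
end

section
/- Let s ≥ 4 be an integer and let q be a real number with 0 < q < 1. Then ∑_{j=0}^{∞} [ log(1 + q^{(s-2)j+1}) + log(1 + q^{(s-2)j+s-3}) + log(1 - q^{(s-2)(j+1)}) ] = - ∑_{n=1}^{∞} q^n · c_s(n), where c_s(n) := ∑_{d | n} (1/d)·((-1)^d · δ₁(n/d, s-2) + δ₂(n/d, s-2)), both series converging. -/
/-- The function `δ₁(m, v)`. -/
def delta1 (m v : ℕ) : ℚ :=
  if m % 2 = 1 ∧ v = 2 then 2
  else if 3 ≤ v ∧ (m % v = 1 ∨ m % v = v - 1) then 1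
  else 0

/-- The function `δ₂(m, v)`. -/
def delta2 (m v : ℕ) : ℚ := if m % v = 0 then 1 else 0

/-- `c_s(n) = ∑_{d ∣ n} (1/d)·((-1)^d·δ₁(n/d, s-2) + δ₂(n/d, s-2))`. -/
def cS (s n : ℕ) : ℚ :=
  ∑ d ∈ n.divisors,
    (1 / (d : ℚ)) * ((-1) ^ d * delta1 (n / d) (s - 2) + delta2 (n / d) (s - 2))

open Real

namespace Stmt9Aux

/-- Real version of `delta1`. -/
noncomputable def d1R (m v : ℕ) : ℝ :=
  if m % 2 = 1 ∧ v = 2 then 2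
  else if 3 ≤ v ∧ (m % v = 1 ∨ m % v = v - 1) then 1
  else 0

/-- Real version of `delta2`. -/
noncomputable def d2R (m v : ℕ) : ℝ := if m % v = 0 then 1 else 0

lemma d1R_eq (m v : ℕ) : ((delta1 m v : ℚ) : ℝ) = d1R m v := by
  unfold delta1 d1R; split_ifs <;> norm_num

lemma d2R_eq (m v : ℕ) : ((delta2 m v : ℚ) : ℝ) = d2R m v := by
  unfold delta2 d2R; split_ifs <;> norm_num

lemma cS_cast (s n : ℕ) :
    ((cS s n : ℚ) : ℝ) =
      ∑ d ∈ n.divisors,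
        (1 / (d : ℝ)) * ((-1) ^ d * d1R (n / d) (s - 2) + d2R (n / d) (s - 2)) := by
  unfold cS
  push_cast [d1R_eq, d2R_eq]
  exact Finset.sum_congr rfl fun x _ => by ring

/-- First family of terms: exponent residue `1 mod v`. -/
noncomputable def G1 (v : ℕ) (q : ℝ) (d m : ℕ) : ℝ :=
  if d ≠ 0 ∧ m % v = 1 then (-1) ^ d * q ^ (d * m) / d else 0

/-- Second family of terms: exponent residue `v - 1 mod v`. -/
noncomputable def G2 (v : ℕ) (q : ℝ) (d m : ℕ) : ℝ :=
  if d ≠ 0 ∧ m % v = v - 1 then (-1) ^ d * q ^ (d * m) / d else 0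

/-- Third family of terms: exponent residue `0 mod v`. -/
noncomputable def G3 (v : ℕ) (q : ℝ) (d m : ℕ) : ℝ :=
  if d ≠ 0 ∧ m ≠ 0 ∧ m % v = 0 then q ^ (d * m) / d else 0

variable {q : ℝ} {v : ℕ}

lemma maj_summable (hq0 : 0 < q) (hq1 : q < 1) :
    Summable fun p : ℕ × ℕ => q⁻¹ * (q ^ p.1 * q ^ p.2) :=
  (((summable_geometric_of_lt_one hq0.le hq1).mul_of_nonneg
    (summable_geometric_of_lt_one hq0.le hq1)
    (fun n => pow_nonneg hq0.le n) (fun n => pow_nonneg hq0.le n))).mul_left _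

lemma maj_bound (hq0 : 0 < q) (hq1 : q < 1) {d m : ℕ} (hd : d ≠ 0) (hm : m ≠ 0) :
    q ^ (d * m) / (d : ℝ) ≤ q⁻¹ * (q ^ d * q ^ m) := by
  obtain ⟨a, rfl⟩ : ∃ a, d = a + 1 := ⟨d - 1, by omega⟩
  obtain ⟨b, rfl⟩ : ∃ b, m = b + 1 := ⟨m - 1, by omega⟩
  have h1 : q ^ ((a + 1) * (b + 1)) ≤ q ^ (a + b + 1) :=
    pow_le_pow_of_le_one hq0.le hq1.le (by nlinarith)
  have h2 : q ^ ((a + 1) * (b + 1)) / ((a + 1 : ℕ) : ℝ) ≤ q ^ ((a + 1) * (b + 1)) := by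
    apply div_le_self (by positivity)
    exact_mod_cast Nat.one_le_iff_ne_zero.mpr (Nat.succ_ne_zero a)
  have h3 : q⁻¹ * (q ^ (a + 1) * q ^ (b + 1)) = q ^ (a + b + 1) := by
    rw [← pow_add]
    have he : a + 1 + (b + 1) = (a + b + 1) + 1 := by ring
    rw [he, pow_succ]
    field_simp
  rw [h3]
  exact h2.trans h1

lemma summable_G1 (hq0 : 0 < q) (hq1 : q < 1) (hv : 2 ≤ v) :
    Summable fun p : ℕ × ℕ => G1 v q p.1 p.2 := by
  refine Summable.of_norm_bounded (maj_summable hq0 hq1) fun ⟨d, m⟩ => ?_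
  simp only [G1, Real.norm_eq_abs]
  split_ifs with h
  · have hm : m ≠ 0 := by rintro rfl; rw [Nat.zero_mod] at h; omega
    rw [abs_div, abs_mul, abs_pow, abs_neg, abs_one, one_pow, one_mul,
      abs_of_nonneg (pow_nonneg hq0.le _), Nat.abs_cast]
    exact maj_bound hq0 hq1 h.1 hm
  · rw [abs_zero]; positivity

lemma summable_G2 (hq0 : 0 < q) (hq1 : q < 1) (hv : 2 ≤ v) :
    Summable fun p : ℕ × ℕ => G2 v q p.1 p.2 := by
  refine Summable.of_norm_bounded (maj_summable hq0 hq1) fun ⟨d, m⟩ => ?_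
  simp only [G2, Real.norm_eq_abs]
  split_ifs with h
  · have hm : m ≠ 0 := by rintro rfl; rw [Nat.zero_mod] at h; omega
    rw [abs_div, abs_mul, abs_pow, abs_neg, abs_one, one_pow, one_mul,
      abs_of_nonneg (pow_nonneg hq0.le _), Nat.abs_cast]
    exact maj_bound hq0 hq1 h.1 hm
  · rw [abs_zero]; positivity

lemma summable_G3 (hq0 : 0 < q) (hq1 : q < 1) (hv : 2 ≤ v) :
    Summable fun p : ℕ × ℕ => G3 v q p.1 p.2 := by
  refine Summable.of_norm_bounded (maj_summable hq0 hq1) fun ⟨d, m⟩ => ?_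
  simp only [G3, Real.norm_eq_abs]
  split_ifs with h
  · rw [abs_div, abs_of_nonneg (pow_nonneg hq0.le _), Nat.abs_cast]
    exact maj_bound hq0 hq1 h.1 h.2.1
  · rw [abs_zero]; positivity

lemma hasSum_P1 (hv : 2 ≤ v) {σ : ℝ} (h : HasSum (fun p : ℕ × ℕ => G1 v q p.1 p.2) σ) :
    HasSum (fun p : ℕ × ℕ =>
      (-1) ^ (p.1 + 1) * q ^ ((p.1 + 1) * (v * p.2 + 1)) / (p.1 + 1)) σ := by
  have hinj : Function.Injective (fun p : ℕ × ℕ => ((p.1 + 1, v * p.2 + 1) : ℕ × ℕ)) := by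
    rintro ⟨a, b⟩ ⟨c, d⟩ he
    simp only [Prod.mk.injEq] at he
    have h' : v * b = v * d := Nat.add_right_cancel he.2
    exact Prod.ext (by omega) (Nat.eq_of_mul_eq_mul_left (by omega) h')
  have hvan : ∀ x ∉ Set.range (fun p : ℕ × ℕ => ((p.1 + 1, v * p.2 + 1) : ℕ × ℕ)),
      (fun p : ℕ × ℕ => G1 v q p.1 p.2) x = 0 := by
    rintro ⟨d, m⟩ hx
    simp only [G1]
    rw [if_neg]
    rintro ⟨hd, hm⟩
    refine hx ⟨(d - 1, m / v), ?_⟩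
    have h2 : v * (m / v) + 1 = m := by
      conv_rhs => rw [← Nat.div_add_mod m v]
      rw [hm]
    show ((d - 1) + 1, v * (m / v) + 1) = (d, m)
    rw [h2, show d - 1 + 1 = d from by omega]
  have hc := (hinj.hasSum_iff hvan).mpr h
  refine hc.congr_fun fun p => ?_
  obtain ⟨d, j⟩ := p
  have hcond : (v * j + 1) % v = 1 := by
    rw [Nat.mul_add_mod]; exact Nat.mod_eq_of_lt (by omega)
  simp only [Function.comp_apply, G1]
  rw [if_pos ⟨Nat.succ_ne_zero d, hcond⟩]
  norm_cast

lemma hasSum_P2 (hv : 2 ≤ v) {σ : ℝ} (h : HasSum (fun p : ℕ × ℕ => G2 v q p.1 p.2) σ) :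
    HasSum (fun p : ℕ × ℕ =>
      (-1) ^ (p.1 + 1) * q ^ ((p.1 + 1) * (v * p.2 + (v - 1))) / (p.1 + 1)) σ := by
  have hinj : Function.Injective (fun p : ℕ × ℕ => ((p.1 + 1, v * p.2 + (v - 1)) : ℕ × ℕ)) := by
    rintro ⟨a, b⟩ ⟨c, d⟩ he
    simp only [Prod.mk.injEq] at he
    have h' : v * b = v * d := Nat.add_right_cancel he.2
    exact Prod.ext (by omega) (Nat.eq_of_mul_eq_mul_left (by omega) h')
  have hvan : ∀ x ∉ Set.range (fun p : ℕ × ℕ => ((p.1 + 1, v * p.2 + (v - 1)) : ℕ × ℕ)),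
      (fun p : ℕ × ℕ => G2 v q p.1 p.2) x = 0 := by
    rintro ⟨d, m⟩ hx
    simp only [G2]
    rw [if_neg]
    rintro ⟨hd, hm⟩
    refine hx ⟨(d - 1, m / v), ?_⟩
    have h2 : v * (m / v) + (v - 1) = m := by
      conv_rhs => rw [← Nat.div_add_mod m v]
      rw [hm]
    show ((d - 1) + 1, v * (m / v) + (v - 1)) = (d, m)
    rw [h2, show d - 1 + 1 = d from by omega]
  have hc := (hinj.hasSum_iff hvan).mpr h
  refine hc.congr_fun fun p => ?_
  obtain ⟨d, j⟩ := p
  have hcond : (v * j + (v - 1)) % v = v - 1 := by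
    rw [Nat.mul_add_mod]; exact Nat.mod_eq_of_lt (by omega)
  simp only [Function.comp_apply, G2]
  rw [if_pos ⟨Nat.succ_ne_zero d, hcond⟩]
  norm_cast

lemma hasSum_P3 (hv : 2 ≤ v) {σ : ℝ} (h : HasSum (fun p : ℕ × ℕ => G3 v q p.1 p.2) σ) :
    HasSum (fun p : ℕ × ℕ =>
      q ^ ((p.1 + 1) * (v * (p.2 + 1))) / (p.1 + 1)) σ := by
  have hinj : Function.Injective (fun p : ℕ × ℕ => ((p.1 + 1, v * (p.2 + 1)) : ℕ × ℕ)) := by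
    rintro ⟨a, b⟩ ⟨c, d⟩ he
    simp only [Prod.mk.injEq] at he
    have h' := Nat.eq_of_mul_eq_mul_left (show 0 < v by omega) he.2
    exact Prod.ext (by omega) (by omega)
  have hvan : ∀ x ∉ Set.range (fun p : ℕ × ℕ => ((p.1 + 1, v * (p.2 + 1)) : ℕ × ℕ)),
      (fun p : ℕ × ℕ => G3 v q p.1 p.2) x = 0 := by
    rintro ⟨d, m⟩ hx
    simp only [G3]
    rw [if_neg]
    rintro ⟨hd, hm, hmv⟩
    have hdvd : v * (m / v) = m := Nat.mul_div_cancel' (Nat.dvd_of_mod_eq_zero hmv)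
    obtain ⟨k, hkdef⟩ : ∃ k, m / v = k := ⟨_, rfl⟩
    rw [hkdef] at hdvd
    have hk : k ≠ 0 := by rintro rfl; rw [Nat.mul_zero] at hdvd; exact hm hdvd.symm
    refine hx ⟨(d - 1, k - 1), ?_⟩
    show ((d - 1) + 1, v * ((k - 1) + 1)) = (d, m)
    rw [show (k - 1) + 1 = k from by omega, hdvd, show d - 1 + 1 = d from by omega]
  have hc := (hinj.hasSum_iff hvan).mpr h
  refine hc.congr_fun fun p => ?_
  obtain ⟨d, j⟩ := p
  simp only [Function.comp_apply, G3]
  rw [if_pos ⟨Nat.succ_ne_zero d,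
    Nat.mul_ne_zero (by omega) (Nat.succ_ne_zero j), Nat.mul_mod_right v (j + 1)⟩]
  norm_cast

lemma log_row (hq0 : 0 < q) (hq1 : q < 1) {a : ℕ} (ha : a ≠ 0) :
    HasSum (fun d : ℕ => (-1) ^ (d + 1) * q ^ ((d + 1) * a) / (d + 1))
      (-Real.log (1 + q ^ a)) := by
  have hqa : q ^ a < 1 := pow_lt_one₀ hq0.le hq1 ha
  have habs : |(-(q ^ a))| < 1 := by
    rw [abs_neg, abs_of_nonneg (pow_nonneg hq0.le a)]
    exact hqa
  have h := hasSum_pow_div_log_of_abs_lt_one habs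
  rw [sub_neg_eq_add] at h
  refine h.congr_fun fun d => ?_
  rw [show (-(q ^ a)) ^ (d + 1) = (-1) ^ (d + 1) * q ^ ((d + 1) * a) from by
    rw [neg_pow, ← pow_mul, mul_comm a (d + 1)]]

lemma log_row' (hq0 : 0 < q) (hq1 : q < 1) {a : ℕ} (ha : a ≠ 0) :
    HasSum (fun d : ℕ => q ^ ((d + 1) * a) / (d + 1))
      (-Real.log (1 - q ^ a)) := by
  have hqa : q ^ a < 1 := pow_lt_one₀ hq0.le hq1 ha
  have habs : |q ^ a| < 1 := by
    rw [abs_of_nonneg (pow_nonneg hq0.le a)]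
    exact hqa
  have h := hasSum_pow_div_log_of_abs_lt_one habs
  refine h.congr_fun fun d => ?_
  rw [show (q ^ a) ^ (d + 1) = q ^ ((d + 1) * a) from by
    rw [← pow_mul, mul_comm a (d + 1)]]

/-- Pointwise identity on divisors. -/
lemma divisor_term (hq0 : 0 < q) (hv : 2 ≤ v) {d m : ℕ} (hd : d ≠ 0) (hm : m ≠ 0) :
    G1 v q d m + G2 v q d m + G3 v q d m =
      q ^ (d * m) * (1 / (d : ℝ) * ((-1) ^ d * d1R m v + d2R m v)) := by
  have hdR : (d : ℝ) ≠ 0 := Nat.cast_ne_zero.mpr hd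
  unfold G1 G2 G3 d1R d2R
  by_cases hv2 : v = 2
  · subst hv2
    have h2 : m % 2 < 2 := Nat.mod_lt _ (by omega)
    split_ifs <;>
      first
      | omega
      | (field_simp; ring)
      | field_simp
  · have hv3 : 3 ≤ v := by omega
    have htlt : m % v < v := Nat.mod_lt _ (by omega)
    split_ifs <;>
      first
      | omega
      | (field_simp; ring)
      | field_simp

end Stmt9Aux

open Stmt9Aux

theorem stmt9 (s : ℕ) (hs : 4 ≤ s) (q : ℝ) (hq0 : 0 < q) (hq1 : q < 1) :
    (Summable fun j : ℕ =>
        Real.log (1 + q ^ ((s - 2) * j + 1)) + Real.log (1 + q ^ ((s - 2) * j + (s - 3))) +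
          Real.log (1 - q ^ ((s - 2) * (j + 1)))) ∧
      (Summable fun n : ℕ => q ^ (n + 1) * ((cS s (n + 1) : ℝ))) ∧
      (∑' j : ℕ,
          (Real.log (1 + q ^ ((s - 2) * j + 1)) + Real.log (1 + q ^ ((s - 2) * j + (s - 3))) +
            Real.log (1 - q ^ ((s - 2) * (j + 1))))) =
        - ∑' n : ℕ, q ^ (n + 1) * ((cS s (n + 1) : ℝ)) := by
  set v := s - 2 with hv
  have hv2 : 2 ≤ v := by omega
  have hs3 : s - 3 = v - 1 := by omega
  simp only [hs3]
  -- Summability of the three double families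
  have hσ1 := summable_G1 (v := v) hq0 hq1 hv2
  have hσ2 := summable_G2 (v := v) hq0 hq1 hv2
  have hσ3 := summable_G3 (v := v) hq0 hq1 hv2
  set σ1 := ∑' p : ℕ × ℕ, G1 v q p.1 p.2 with hσ1d
  set σ2 := ∑' p : ℕ × ℕ, G2 v q p.1 p.2 with hσ2d
  set σ3 := ∑' p : ℕ × ℕ, G3 v q p.1 p.2 with hσ3d
  set S := σ1 + σ2 + σ3 with hSd
  have hP1 := hasSum_P1 (q := q) hv2 hσ1.hasSum
  have hP2 := hasSum_P2 (q := q) hv2 hσ2.hasSum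
  have hP3 := hasSum_P3 (q := q) hv2 hσ3.hasSum
  -- the V-side double sum
  have hV : HasSum (fun p : ℕ × ℕ =>
      (-1) ^ (p.1 + 1) * q ^ ((p.1 + 1) * (v * p.2 + 1)) / (p.1 + 1) +
        (-1) ^ (p.1 + 1) * q ^ ((p.1 + 1) * (v * p.2 + (v - 1))) / (p.1 + 1) +
        q ^ ((p.1 + 1) * (v * (p.2 + 1))) / (p.1 + 1)) S :=
    (hP1.add hP2).add hP3
  -- swap coordinates
  have hVswap : HasSum (fun p : ℕ × ℕ =>
      (-1) ^ (p.2 + 1) * q ^ ((p.2 + 1) * (v * p.1 + 1)) / (p.2 + 1) +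
        (-1) ^ (p.2 + 1) * q ^ ((p.2 + 1) * (v * p.1 + (v - 1))) / (p.2 + 1) +
        q ^ ((p.2 + 1) * (v * (p.1 + 1))) / (p.2 + 1)) S :=
    (Equiv.prodComm ℕ ℕ).hasSum_iff.mpr hV
  -- fiberwise over j: the log series
  have hrow : ∀ j : ℕ, HasSum (fun d : ℕ =>
      (-1) ^ (d + 1) * q ^ ((d + 1) * (v * j + 1)) / (d + 1) +
        (-1) ^ (d + 1) * q ^ ((d + 1) * (v * j + (v - 1))) / (d + 1) +
        q ^ ((d + 1) * (v * (j + 1))) / (d + 1))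
      (-(Real.log (1 + q ^ (v * j + 1)) + Real.log (1 + q ^ (v * j + (v - 1))) +
          Real.log (1 - q ^ (v * (j + 1))))) := by
    intro j
    have h1 := log_row hq0 hq1 (a := v * j + 1) (by omega)
    have h2 := log_row hq0 hq1 (a := v * j + (v - 1)) (by omega)
    have h3 := log_row' hq0 hq1 (a := v * (j + 1))
      (Nat.mul_ne_zero (by omega) (Nat.succ_ne_zero j))
    have hh := (h1.add h2).add h3
    convert hh using 1
    ring
  have hlog : HasSum (fun j : ℕ =>
      -(Real.log (1 + q ^ (v * j + 1)) + Real.log (1 + q ^ (v * j + (v - 1))) +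
          Real.log (1 - q ^ (v * (j + 1))))) S :=
    hVswap.prod_fiberwise fun j => hrow j
  have hlog' : HasSum (fun j : ℕ =>
      Real.log (1 + q ^ (v * j + 1)) + Real.log (1 + q ^ (v * j + (v - 1))) +
        Real.log (1 - q ^ (v * (j + 1)))) (-S) := by
    simpa only [neg_neg] using hlog.neg
  -- the G-side double sum, grouped by n = d * m
  have hG : HasSum (fun p : ℕ × ℕ => G1 v q p.1 p.2 + G2 v q p.1 p.2 + G3 v q p.1 p.2) S :=
    (hσ1.hasSum.add hσ2.hasSum).add hσ3.hasSum
  have hfib := hG.tsum_fiberwise (fun p : ℕ × ℕ => p.1 * p.2)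
  have hfib' : HasSum (fun n : ℕ => if n = 0 then (0:ℝ) else q ^ n * ((cS s n : ℚ) : ℝ)) S := by
    refine hfib.congr_fun fun n => ?_
    by_cases hn : n = 0
    · subst hn
      rw [if_pos rfl]
      have hzero : ∀ p : (fun p : ℕ × ℕ => p.1 * p.2) ⁻¹' {(0 : ℕ)},
          G1 v q (p : ℕ × ℕ).1 (p : ℕ × ℕ).2 + G2 v q (p : ℕ × ℕ).1 (p : ℕ × ℕ).2 +
            G3 v q (p : ℕ × ℕ).1 (p : ℕ × ℕ).2 = 0 := by
        rintro ⟨⟨d, m⟩, hp⟩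
        simp only [Set.mem_preimage, Set.mem_singleton_iff, Nat.mul_eq_zero] at hp
        unfold G1 G2 G3
        rcases hp with rfl | rfl
        · simp
        · rw [if_neg (by simp), if_neg (by simp only [ne_eq, Nat.zero_mod]; omega),
            if_neg (by simp)]
          norm_num
      exact ((tsum_congr hzero).trans tsum_zero).symm
    · rw [if_neg hn]
      have hset : (fun p : ℕ × ℕ => p.1 * p.2) ⁻¹' {n} = ↑n.divisorsAntidiagonal := by
        ext p
        simp [Nat.mem_divisorsAntidiagonal, hn]
      rw [hset, Finset.tsum_subtype' n.divisorsAntidiagonal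
          (fun p => G1 v q p.1 p.2 + G2 v q p.1 p.2 + G3 v q p.1 p.2),
        Nat.sum_divisorsAntidiagonal (fun d e => G1 v q d e + G2 v q d e + G3 v q d e),
        cS_cast, Finset.mul_sum]
      simp only [← hv]
      refine Finset.sum_congr rfl fun d hd => ?_
      rw [Nat.mem_divisors] at hd
      have hd0 : d ≠ 0 := by
        rintro rfl
        exact hn (Nat.eq_zero_of_zero_dvd hd.1)
      have hdm : d * (n / d) = n := Nat.mul_div_cancel' hd.1
      have hm0 : n / d ≠ 0 := by
        rintro h0
        rw [h0, Nat.mul_zero] at hdm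
        exact hn hdm.symm
      have hterm := divisor_term (q := q) hq0 hv2 hd0 hm0
      rw [hdm] at hterm
      exact hterm.symm
  -- conclude
  have hsum2 : Summable fun n : ℕ => q ^ (n + 1) * ((cS s (n + 1) : ℚ) : ℝ) := by
    have hsh := (summable_nat_add_iff 1).mpr hfib'.summable
    exact hsh.congr fun n => if_neg (Nat.succ_ne_zero n)
  refine ⟨hlog'.summable, hsum2, ?_⟩
  have htsum2 : (∑' n : ℕ, q ^ (n + 1) * ((cS s (n + 1) : ℚ) : ℝ)) = S := by
    have h0 := Summable.tsum_eq_zero_add hfib'.summable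
    rw [hfib'.tsum_eq] at h0
    have hcg : (∑' n : ℕ, q ^ (n + 1) * ((cS s (n + 1) : ℚ) : ℝ)) =
        ∑' n : ℕ, (if n + 1 = 0 then (0:ℝ) else q ^ (n + 1) * ((cS s (n + 1) : ℚ) : ℝ)) :=
      tsum_congr fun n => (if_neg (Nat.succ_ne_zero n)).symm
    rw [hcg]
    rw [if_pos rfl] at h0
    linarith [h0]
  rw [htsum2, hlog'.tsum_eq]
end

section
/- For each positive integer n and all positive integers k, m with n = 2^k · m and m odd and m > 1: ∑_{d | n, n/d odd} 2·(-1)^d / d + ∑_{d | n, n/d even} 1/d = ∑_{d | n, d odd} 2/d, where all sums are over positive divisors d of n satisfying the stated conditions. -/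
open Finset

lemma not_two_dvd_of_odd {a : ℕ} (h : Odd a) : ¬ 2 ∣ a := by
  rw [Nat.odd_iff] at h; omega

lemma odd_of_dvd_odd {d m : ℕ} (hd : d ∣ m) (hm : Odd m) : Odd d := by
  rw [Nat.odd_iff] at hm ⊢
  rcases Nat.even_or_odd d with he | ho
  · have h2 : 2 ∣ m := he.two_dvd.trans hd
    omega
  · exact Nat.odd_iff.mp ho

lemma filt_oddquot (k m : ℕ) (hm : Odd m) (hm0 : m ≠ 0) :
    ((2^k*m).divisors.filter (fun d => Odd ((2^k*m) / d)))
      = m.divisors.image (fun e => 2^k * e) := by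
  have h2k : (2:ℕ)^k ≠ 0 := by positivity
  have hn0 : 2^k*m ≠ 0 := by positivity
  ext d
  simp only [mem_filter, Nat.mem_divisors, mem_image]
  constructor
  · rintro ⟨⟨hd, -⟩, hodd⟩
    have hd0 : d ≠ 0 := by rintro rfl; simp at hodd
    have hq : d * ((2^k*m)/d) = 2^k*m := Nat.mul_div_cancel' hd
    have hqd : (2^k*m)/d ∣ 2^k*m := ⟨d, by linarith [hq, Nat.mul_comm d ((2^k*m)/d)]⟩
    have hqm : (2^k*m)/d ∣ m :=
      (Nat.Coprime.dvd_of_dvd_mul_left (hodd.coprime_two_right.pow_right k) hqd)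
    have hq0 : (2^k*m)/d ≠ 0 := by
      rintro h0; rw [h0] at hodd; simp [Nat.odd_iff] at hodd
    have heq : m / ((2^k*m)/d) * ((2^k*m)/d) = m := Nat.div_mul_cancel hqm
    refine ⟨m / ((2^k*m)/d), ⟨Nat.div_dvd_of_dvd hqm, hm0⟩, ?_⟩
    have hmm : (2^k * (m / ((2^k*m)/d))) * ((2^k*m)/d) = d * ((2^k*m)/d) := by
      rw [mul_assoc, heq, hq]
    exact Nat.eq_of_mul_eq_mul_right (Nat.pos_of_ne_zero hq0) hmm
  · rintro ⟨e, ⟨he, -⟩, rfl⟩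
    have he0 : e ≠ 0 := by rintro rfl; simp at he; tauto
    refine ⟨⟨mul_dvd_mul_left _ he, hn0⟩, ?_⟩
    rw [Nat.mul_div_mul_left _ _ (by positivity)]
    exact odd_of_dvd_odd (Nat.div_dvd_of_dvd he) hm

lemma filt_odd (k m : ℕ) (hk : 0 < k) (hm : Odd m) (hm0 : m ≠ 0) :
    ((2^k*m).divisors.filter (fun d => Odd d)) = m.divisors := by
  ext d
  simp only [mem_filter, Nat.mem_divisors]
  constructor
  · rintro ⟨⟨hd, -⟩, hodd⟩
    exact ⟨Nat.Coprime.dvd_of_dvd_mul_left (hodd.coprime_two_right.pow_right k) hd, hm0⟩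
  · rintro ⟨hd, -⟩
    exact ⟨⟨hd.mul_left _, by positivity⟩, odd_of_dvd_odd hd hm⟩

lemma divisors_two_pow_mul (k m : ℕ) (hm : Odd m) (hm0 : m ≠ 0) :
    (2^k*m).divisors = ((Finset.range (k+1)) ×ˢ m.divisors).image (fun p => 2^p.1 * p.2) := by
  ext d
  simp only [Nat.mem_divisors, mem_image, mem_product, mem_range, Prod.exists]
  constructor
  · rintro ⟨hd, -⟩
    have hd0 : d ≠ 0 := by
      rintro rfl; exact absurd (Nat.eq_zero_of_zero_dvd hd) (by positivity)
    set j := d.factorization 2 with hj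
    have hpj : 2^j ∣ d := Nat.ordProj_dvd d 2
    set e := d / 2^j with he
    have hde : d = 2^j * e := (Nat.mul_div_cancel' hpj).symm
    have h2e : ¬ (2 ∣ e) := Nat.not_dvd_ordCompl Nat.prime_two hd0
    have heodd : Odd e := Nat.odd_iff.mpr (by omega)
    have hjk : j ≤ k := by
      have hle := (Nat.factorization_le_iff_dvd hd0 (by positivity)).mpr hd
      have h2 := Finsupp.le_def.mp hle 2
      rwa [Nat.factorization_mul (by positivity) hm0, Nat.Prime.factorization_pow Nat.prime_two,
        Finsupp.add_apply, Finsupp.single_eq_same,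
        Nat.factorization_eq_zero_of_not_dvd (not_two_dvd_of_odd hm), add_zero] at h2
    have hedvd : e ∣ m := by
      have : e ∣ 2^k * m := (Dvd.intro_left _ hde.symm).trans hd
      exact Nat.Coprime.dvd_of_dvd_mul_left (heodd.coprime_two_right.pow_right k) this
    exact ⟨j, e, ⟨by omega, hedvd, hm0⟩, hde.symm⟩
  · rintro ⟨j, e, ⟨hj, he, -⟩, rfl⟩
    exact ⟨mul_dvd_mul (pow_dvd_pow 2 (by omega)) he, by positivity⟩

theorem stmt11 (n k m : ℕ) (hk : 0 < k) (hm : Odd m) (hm1 : 1 < m)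
    (hn : n = 2 ^ k * m) :
    ∑ d ∈ n.divisors.filter (fun d => Odd (n / d)), 2 * (-1 : ℚ) ^ d / (d : ℚ) +
        ∑ d ∈ n.divisors.filter (fun d => Even (n / d)), 1 / (d : ℚ) =
      ∑ d ∈ n.divisors.filter (fun d => Odd d), 2 / (d : ℚ) := by
  subst hn
  have hm0 : m ≠ 0 := by omega
  set S : ℚ := ∑ e ∈ m.divisors, 1 / (e : ℚ) with hS
  -- first sum
  have hinj : ∀ x ∈ m.divisors, ∀ y ∈ m.divisors,
      2^k * x = 2^k * y → x = y := fun a _ b _ h =>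
    Nat.eq_of_mul_eq_mul_left (by positivity) h
  have h1 : ∑ d ∈ ((2^k*m).divisors.filter (fun d => Odd ((2^k*m) / d))),
      2 * (-1 : ℚ) ^ d / (d : ℚ) = (2 / 2^k) * S := by
    rw [filt_oddquot k m hm hm0, Finset.sum_image hinj]
    rw [Finset.mul_sum]
    refine Finset.sum_congr rfl fun e he => ?_
    have h2d : 2 ∣ 2^k * e := dvd_mul_of_dvd_left (dvd_pow_self 2 (by omega)) e
    have heven : Even (2^k * e) := Nat.even_iff.mpr (by omega)
    rw [heven.neg_one_pow]
    have he0 : e ≠ 0 := Nat.pos_of_mem_divisors he |>.ne'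
    push_cast
    field_simp
    try ring
  -- third sum
  have h3 : ∑ d ∈ ((2^k*m).divisors.filter (fun d => Odd d)), 2 / (d : ℚ) = 2 * S := by
    rw [filt_odd k m hk hm hm0, Finset.mul_sum]
    exact Finset.sum_congr rfl fun e _ => by ring
  -- total sum
  have hinj2 : ∀ p ∈ (Finset.range (k+1)) ×ˢ m.divisors, ∀ q ∈ (Finset.range (k+1)) ×ˢ m.divisors,
      (fun p : ℕ × ℕ => 2^p.1 * p.2) p = (fun p : ℕ × ℕ => 2^p.1 * p.2) q → p = q := by
    rintro ⟨j1, e1⟩ h1' ⟨j2, e2⟩ h2' h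
    simp only [mem_product, Nat.mem_divisors] at h1' h2'
    simp only at h
    have ho1 : Odd e1 := odd_of_dvd_odd h1'.2.1 hm
    have ho2 : Odd e2 := odd_of_dvd_odd h2'.2.1 hm
    have he10 : e1 ≠ 0 := by rintro rfl; simp [Nat.odd_iff] at ho1
    have hjj : j1 = j2 := by
      have := congrArg (fun x => x.factorization 2) h
      rwa [Nat.factorization_mul (by positivity) he10,
        Nat.factorization_mul (by positivity) (by rintro rfl; simp [Nat.odd_iff] at ho2),
        Nat.Prime.factorization_pow Nat.prime_two, Nat.Prime.factorization_pow Nat.prime_two,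
        Finsupp.coe_add, Pi.add_apply, Finsupp.coe_add, Pi.add_apply,
        Finsupp.single_eq_same, Finsupp.single_eq_same,
        Nat.factorization_eq_zero_of_not_dvd (not_two_dvd_of_odd ho1),
        Nat.factorization_eq_zero_of_not_dvd (not_two_dvd_of_odd ho2),
        add_zero, add_zero] at this
    subst hjj
    have : e1 = e2 := Nat.eq_of_mul_eq_mul_left (by positivity) h
    rw [this]
  have htot : ∑ d ∈ (2^k*m).divisors, 1 / (d : ℚ)
      = (∑ j ∈ Finset.range (k+1), ((1:ℚ)/2)^j) * S := by
    rw [divisors_two_pow_mul k m hm hm0, Finset.sum_image hinj2, Finset.sum_product,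
      Finset.sum_mul]
    refine Finset.sum_congr rfl fun j _ => ?_
    rw [hS, Finset.mul_sum]
    refine Finset.sum_congr rfl fun e he => ?_
    have he0 : e ≠ 0 := Nat.pos_of_mem_divisors he |>.ne'
    push_cast
    rw [div_pow, one_pow]
    field_simp
  -- second sum via complement
  have hsplit : ∑ d ∈ ((2^k*m).divisors.filter (fun d => Odd ((2^k*m) / d))), 1 / (d : ℚ)
      + ∑ d ∈ ((2^k*m).divisors.filter (fun d => Even ((2^k*m) / d))), 1 / (d : ℚ)
      = ∑ d ∈ (2^k*m).divisors, 1 / (d : ℚ) := by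
    rw [← Finset.sum_filter_add_sum_filter_not (2^k*m).divisors (fun d => Odd ((2^k*m)/d))]
    congr 1
    apply Finset.sum_congr _ (fun _ _ => rfl)
    apply Finset.filter_congr
    intro d _
    simp [Nat.not_odd_iff_even]
  have h1' : ∑ d ∈ ((2^k*m).divisors.filter (fun d => Odd ((2^k*m) / d))),
      1 / (d : ℚ) = (1 / 2^k) * S := by
    rw [filt_oddquot k m hm hm0, Finset.sum_image hinj, Finset.mul_sum]
    refine Finset.sum_congr rfl fun e he => ?_
    have he0 : e ≠ 0 := Nat.pos_of_mem_divisors he |>.ne'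
    push_cast
    field_simp
  have hgeom : ∑ j ∈ Finset.range (k+1), ((1:ℚ)/2)^j = 2 - (1/2^k) := by
    rw [geom_sum_eq (by norm_num)]
    rw [div_pow, one_pow]
    field_simp
    ring
  have h2 : ∑ d ∈ ((2^k*m).divisors.filter (fun d => Even ((2^k*m) / d))), 1 / (d : ℚ)
      = (2 - 2 * (1/2^k)) * S := by
    have := hsplit
    rw [h1', htot, hgeom] at this
    linarith [this]
  rw [h1, h2, h3]
  have h2k : (2:ℚ)^k ≠ 0 := by positivity
  field_simp
  ring
end

section
/- For each positive integer n of the form n = 2^k · m with k ≥ 2 and m odd: ∑_{d | n, n/d odd} (-1)^d / d + ∑_{d | n, n/d ≡ 0 (mod 4)} 1/d = (2 - 3/2^k) · ∑_{d | n, d odd} 1/d, where all sums are over positive divisors d of n satisfying the stated conditions. -/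
open Finset

private lemma sumH (j m : ℕ) (hm : Odd m) (hm0 : 0 < m) :
    ∑ d ∈ (2 ^ j * m).divisors, 1 / (d : ℚ) =
      (2 - 1 / 2 ^ j) * ∑ e ∈ m.divisors, 1 / (e : ℚ) := by
  have hm2 : ¬ (2 ∣ m) := by
    rw [Nat.two_dvd_ne_zero]; exact Nat.odd_iff.mp hm
  have hfm : m.factorization 2 = 0 := Nat.factorization_eq_zero_of_not_dvd hm2
  have key : ∑ d ∈ (2 ^ j * m).divisors, 1 / (d : ℚ) =
      ∑ p ∈ (Finset.range (j + 1)) ×ˢ m.divisors, 1 / ((2 ^ p.1 * p.2 : ℕ) : ℚ) := by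
    refine Finset.sum_nbij' (fun d => (d.factorization 2, d / 2 ^ d.factorization 2))
      (fun p => 2 ^ p.1 * p.2) ?_ ?_ ?_ ?_ ?_
    · intro d hd
      rw [Nat.mem_divisors] at hd
      obtain ⟨hdvd, hne⟩ := hd
      have hd0 : d ≠ 0 := by
        rintro rfl; exact hne (zero_dvd_iff.mp hdvd)
      rw [Finset.mem_product]
      constructor
      · rw [Finset.mem_range, Nat.lt_succ_iff]
        have := (Nat.factorization_le_iff_dvd hd0 hne).mpr hdvd 2
        rwa [Nat.factorization_mul (by positivity) hm0.ne', Nat.Prime.factorization_pow Nat.prime_two,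
          Finsupp.add_apply, Finsupp.single_eq_same, hfm, add_zero] at this
      · rw [Nat.mem_divisors]
        refine ⟨?_, hm0.ne'⟩
        have h1 : (d / 2 ^ d.factorization 2 : ℕ) ∣ 2 ^ j * m :=
          dvd_trans (Nat.ordCompl_dvd d 2) hdvd
        have h2 : ¬ (2 ∣ d / 2 ^ d.factorization 2) := Nat.not_dvd_ordCompl Nat.prime_two hd0
        exact (Nat.Coprime.dvd_of_dvd_mul_left (Nat.Coprime.pow_right _
          ((Nat.Prime.coprime_iff_not_dvd Nat.prime_two).mpr h2).symm) h1)
    · intro p hp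
      rw [Finset.mem_product, Finset.mem_range, Nat.lt_succ_iff, Nat.mem_divisors] at hp
      rw [Nat.mem_divisors]
      exact ⟨mul_dvd_mul (pow_dvd_pow 2 hp.1) hp.2.1, by positivity⟩
    · intro d hd
      rw [Nat.mem_divisors] at hd
      have hd0 : d ≠ 0 := by rintro rfl; exact hd.2 (zero_dvd_iff.mp hd.1)
      exact Nat.ordProj_mul_ordCompl_eq_self d 2
    · intro p hp
      rw [Finset.mem_product, Finset.mem_range, Nat.lt_succ_iff, Nat.mem_divisors] at hp
      have he0 : p.2 ≠ 0 := by
        intro h; exact hm0.ne' (Nat.eq_zero_of_zero_dvd (h ▸ hp.2.1))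
      have he2 : ¬ (2 ∣ p.2) := by
        intro h; exact hm2 (dvd_trans h hp.2.1)
      have hf : (2 ^ p.1 * p.2).factorization 2 = p.1 := by
        rw [Nat.factorization_mul (by positivity) he0, Nat.Prime.factorization_pow Nat.prime_two,
          Finsupp.add_apply, Finsupp.single_eq_same, Nat.factorization_eq_zero_of_not_dvd he2,
          add_zero]
      ext
      · simp [hf]
      · simp only [hf]
        rw [Nat.mul_div_cancel_left _ (by positivity)]
    · intro d hd
      rw [Nat.ordProj_mul_ordCompl_eq_self]
  rw [key, Finset.sum_product, Finset.sum_comm]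
  have hgeom : ∀ e : ℕ, ∑ i ∈ Finset.range (j + 1), 1 / ((2 ^ i * e : ℕ) : ℚ) =
      (2 - 1 / 2 ^ j) * (1 / e) := by
    intro e
    rcases eq_or_ne e 0 with rfl | he
    · simp
    have : ∀ i : ℕ, 1 / ((2 ^ i * e : ℕ) : ℚ) = (1 / 2 : ℚ) ^ i * (1 / e) := by
      intro i; push_cast; rw [div_pow, one_pow]; ring
    simp_rw [this, ← Finset.sum_mul]
    congr 1
    rw [geom_sum_eq (by norm_num) (j + 1)]
    have h2 : (2 : ℚ) ^ j ≠ 0 := by positivity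
    simp only [div_pow, one_pow]
    field_simp
    ring
  calc ∑ e ∈ m.divisors, ∑ i ∈ Finset.range (j + 1), 1 / ((2 ^ i * e : ℕ) : ℚ)
      = ∑ e ∈ m.divisors, (2 - 1 / 2 ^ j) * (1 / (e : ℚ)) := by
        exact Finset.sum_congr rfl (fun e _ => hgeom e)
    _ = (2 - 1 / 2 ^ j) * ∑ e ∈ m.divisors, 1 / (e : ℚ) := by rw [Finset.mul_sum]

theorem stmt12 (n k m : ℕ) (hk : 2 ≤ k) (hm : Odd m) (hn : n = 2 ^ k * m) :
    ∑ d ∈ n.divisors.filter (fun d => Odd (n / d)), (-1 : ℚ) ^ d / (d : ℚ) +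
        ∑ d ∈ n.divisors.filter (fun d => n / d % 4 = 0), 1 / (d : ℚ) =
      (2 - 3 / (2 : ℚ) ^ k) * ∑ d ∈ n.divisors.filter (fun d => Odd d), 1 / (d : ℚ) := by
  have hm0 : 0 < m := hm.pos
  have hm2 : ¬ (2 ∣ m) := by rw [Nat.two_dvd_ne_zero]; exact Nat.odd_iff.mp hm
  have hn0 : n ≠ 0 := by rw [hn]; positivity
  have hcop : Nat.Coprime (2 ^ k) m := Nat.Coprime.pow_left _
    ((Nat.Prime.coprime_iff_not_dvd Nat.prime_two).mpr hm2)
  subst hn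
  set n := 2 ^ k * m with hn
  -- RHS filter = m.divisors
  have hodd_eq : n.divisors.filter (fun d => Odd d) = m.divisors := by
    ext d
    simp only [Finset.mem_filter, Nat.mem_divisors]
    constructor
    · rintro ⟨⟨hdvd, _⟩, hodd⟩
      refine ⟨?_, hm0.ne'⟩
      have hd2 : ¬ (2 ∣ d) := by rw [Nat.two_dvd_ne_zero]; exact Nat.odd_iff.mp hodd
      exact Nat.Coprime.dvd_of_dvd_mul_left (Nat.Coprime.pow_right _
        ((Nat.Prime.coprime_iff_not_dvd Nat.prime_two).mpr hd2).symm) hdvd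
    · rintro ⟨hdvd, _⟩
      exact ⟨⟨dvd_mul_of_dvd_right hdvd _, hn0⟩,
        hm.of_dvd_nat hdvd⟩
  -- first sum filter = image (2^k * ·) m.divisors
  have h1 : n.divisors.filter (fun d => Odd (n / d)) =
      m.divisors.image (fun e => 2 ^ k * e) := by
    ext d
    simp only [Finset.mem_filter, Nat.mem_divisors, Finset.mem_image]
    constructor
    · rintro ⟨⟨hdvd, _⟩, hodd⟩
      have hnd2 : ¬ (2 ∣ n / d) := by rw [Nat.two_dvd_ne_zero]; exact Nat.odd_iff.mp hodd
      have hcop2 : Nat.Coprime (2 ^ k) (n / d) := Nat.Coprime.pow_left _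
        ((Nat.Prime.coprime_iff_not_dvd Nat.prime_two).mpr hnd2)
      have hmul : (n / d) * d = n := Nat.div_mul_cancel hdvd
      have h2k : 2 ^ k ∣ d := by
        have : 2 ^ k ∣ (n / d) * d := by rw [hmul]; exact Dvd.intro m rfl
        exact (Nat.Coprime.dvd_of_dvd_mul_left hcop2 this)
      obtain ⟨e, rfl⟩ := h2k
      refine ⟨e, ⟨?_, hm0.ne'⟩, rfl⟩
      exact (mul_dvd_mul_iff_left (pow_ne_zero k (two_ne_zero)) ).mp hdvd
    · rintro ⟨e, ⟨hdvd, _⟩, rfl⟩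
      refine ⟨⟨mul_dvd_mul_left _ hdvd, hn0⟩, ?_⟩
      have he0 : e ≠ 0 := by rintro rfl; exact hm0.ne' (Nat.eq_zero_of_zero_dvd hdvd)
      have : n / (2 ^ k * e) = m / e := by
        rw [hn, Nat.mul_div_mul_left _ _ (by positivity)]
      rw [this]
      exact hm.of_dvd_nat (Nat.div_dvd_of_dvd hdvd)
  -- second sum filter = divisors of 2^(k-2) * m
  have h2 : n.divisors.filter (fun d => n / d % 4 = 0) = (2 ^ (k - 2) * m).divisors := by
    have hkk : 2 ^ k = 4 * 2 ^ (k - 2) := by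
      rw [show (4 : ℕ) = 2 ^ 2 by norm_num, ← pow_add]
      congr 1; omega
    ext d
    simp only [Finset.mem_filter, Nat.mem_divisors]
    constructor
    · rintro ⟨⟨hdvd, _⟩, h4⟩
      have h4' : 4 ∣ n / d := Nat.dvd_of_mod_eq_zero h4
      have hd4 : 4 * d ∣ n := by
        have := mul_dvd_mul h4' (dvd_refl d)
        rwa [Nat.div_mul_cancel hdvd] at this
      refine ⟨?_, by positivity⟩
      have : 4 * d ∣ 4 * (2 ^ (k - 2) * m) := by
        rwa [← mul_assoc, ← hkk]
      exact (mul_dvd_mul_iff_left (four_ne_zero)).mp this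
    · rintro ⟨hdvd, _⟩
      have hd0 : d ≠ 0 := by
        rintro rfl
        have := Nat.eq_zero_of_zero_dvd hdvd
        have hpos : 0 < 2 ^ (k - 2) * m := by positivity
        omega
      have hd4 : 4 * d ∣ n := by
        rw [hn, hkk, mul_assoc]
        exact mul_dvd_mul_left 4 hdvd
      refine ⟨⟨dvd_trans (dvd_mul_left d 4) hd4, hn0⟩, ?_⟩
      have : 4 ∣ n / d := by
        obtain ⟨c, hc⟩ := hd4
        refine ⟨c, ?_⟩
        rw [hc]
        rw [mul_comm 4 d, mul_assoc, Nat.mul_div_cancel_left _ (Nat.pos_of_ne_zero hd0)]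
      obtain ⟨c, hc⟩ := this
      omega
  rw [h1, h2, hodd_eq, sumH (k - 2) m hm hm0,
    Finset.sum_image (fun a _ b _ h => Nat.eq_of_mul_eq_mul_left (by positivity) h)]
  have hS : ∑ e ∈ m.divisors, (-1 : ℚ) ^ (2 ^ k * e) / ((2 ^ k * e : ℕ) : ℚ)
      = (1 / 2 ^ k) * ∑ e ∈ m.divisors, 1 / (e : ℚ) := by
    rw [Finset.mul_sum]
    refine Finset.sum_congr rfl fun e he => ?_
    have hev : Even (2 ^ k * e) := (Nat.even_pow.mpr ⟨even_two, by omega⟩).mul_right e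
    rw [hev.neg_one_pow]
    have he0 : (e : ℚ) ≠ 0 := by
      exact_mod_cast (Nat.pos_of_mem_divisors he).ne'
    have h2k : (2 : ℚ) ^ k ≠ 0 := by positivity
    push_cast
    field_simp
  rw [hS]
  have hq : (2 : ℚ) ^ (k - 2) * 4 = 2 ^ k := by
    rw [show (4 : ℚ) = 2 ^ 2 by norm_num, ← pow_add]
    congr 1; omega
  have h2k : (2 : ℚ) ^ k ≠ 0 := by positivity
  have h2k2 : (2 : ℚ) ^ (k - 2) ≠ 0 := by positivity
  rw [← hq]
  field_simp
  ring
end
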